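/- Let θ₂ < θ₁ with θ₁, θ₂ ≠ 0, and let φ_θ(s) = −log((e^{−θs} − 1)/(e^{−θ} − 1)) be the Frank generator. Then the function s ↦ φ'_{θ₂}(s)/φ'_{θ₁}(s) = (θ₂ e^{−θ₂s}(e^{−θ₁s} − 1))/(θ₁ e^{−θ₁s}(e^{−θ₂s} − 1)) is strictly increasing on (0,1). -/

import Mathlib

open Set

noncomputable def Hfun (x : ℝ) : ℝ := x * Real.exp x / (Real.exp x - 1)

lemma exp_sub_one_ne (x : ℝ) (hx : x ≠ 0) : Real.exp x - 1 ≠ 0 := by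
  simp [sub_eq_zero, Real.exp_eq_one_iff, hx]

lemma H_hasDerivAt (x : ℝ) (hx : x ≠ 0) :
    HasDerivAt Hfun (Real.exp x * (Real.exp x - 1 - x) / (Real.exp x - 1)^2) x := by
  have h := ((hasDerivAt_id x).mul (Real.hasDerivAt_exp x)).div
      ((Real.hasDerivAt_exp x).sub_const 1) (exp_sub_one_ne x hx)
  convert h using 1
  · rfl
  · rfl
  · rfl
  simp only [Pi.mul_apply, id_eq]
  ring

lemma H_deriv_pos (x : ℝ) (hx : x ≠ 0) : 0 < deriv Hfun x := by
  rw [(H_hasDerivAt x hx).deriv]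
  have h1 := Real.add_one_lt_exp hx
  have h2 := Real.exp_pos x
  have h3 := exp_sub_one_ne x hx
  apply div_pos
  · nlinarith
  · positivity

lemma H_cont (s : Set ℝ) (hs : ∀ x ∈ s, x ≠ 0) : ContinuousOn Hfun s := by
  apply ContinuousOn.div
  · fun_prop
  · fun_prop
  · exact fun x hx => exp_sub_one_ne x (hs x hx)

lemma H_mono_pos : StrictMonoOn Hfun (Ioi 0) := by
  apply strictMonoOn_of_deriv_pos (convex_Ioi 0)
    (H_cont _ (fun x hx => ne_of_gt hx))
  rw [interior_Ioi]
  exact fun x hx => H_deriv_pos x (ne_of_gt hx)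

lemma H_mono_neg : StrictMonoOn Hfun (Iio 0) := by
  apply strictMonoOn_of_deriv_pos (convex_Iio 0)
    (H_cont _ (fun x hx => ne_of_lt hx))
  rw [interior_Iio]
  exact fun x hx => H_deriv_pos x (ne_of_lt hx)

lemma xex_gt (x : ℝ) (hx : x ≠ 0) : Real.exp x - 1 < x * Real.exp x := by
  have h1 := Real.add_one_lt_exp (neg_ne_zero.2 hx)
  have h2 := Real.exp_pos x
  have h3 : Real.exp (-x) * Real.exp x = 1 := by
    rw [← Real.exp_add]; simp
  nlinarith

lemma H_mono (a b : ℝ) (ha : a ≠ 0) (hb : b ≠ 0) (hab : a < b) : Hfun a < Hfun b := by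
  rcases lt_or_gt_of_ne ha with ha' | ha'
  · rcases lt_or_gt_of_ne hb with hb' | hb'
    · exact H_mono_neg ha' hb' hab
    · have h1 : Hfun a < 1 := by
        have hd : Real.exp a - 1 < 0 := by
          have := Real.exp_lt_one_iff.2 ha'
          linarith
        unfold Hfun
        rw [div_lt_iff_of_neg hd]
        have := xex_gt a ha
        linarith
      have h2 : 1 < Hfun b := by
        have hd : 0 < Real.exp b - 1 := by
          have : 1 < Real.exp b := Real.one_lt_exp_iff.2 hb'
          linarith
        unfold Hfun
        rw [lt_div_iff₀ hd]
        have := xex_gt b hb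
        linarith
      linarith
  · exact H_mono_pos ha' (lt_trans ha' hab) hab

lemma sign_lemma (x : ℝ) (hx : x ≠ 0) : 0 < x * (Real.exp x - 1) := by
  rcases lt_or_gt_of_ne hx with h | h
  · have := Real.exp_lt_one_iff.2 h
    nlinarith
  · have := Real.one_lt_exp_iff.2 h
    nlinarith

lemma key_ineq (a b : ℝ) (ha : a ≠ 0) (hb : b ≠ 0) (hab : a < b) :
    0 < a * b * (b * Real.exp b * (Real.exp a - 1) - a * Real.exp a * (Real.exp b - 1)) := by
  have hda := exp_sub_one_ne a ha
  have hdb := exp_sub_one_ne b hb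
  have hH : 0 < Hfun b - Hfun a := sub_pos.2 (H_mono a b ha hb hab)
  have hid : a * b * (b * Real.exp b * (Real.exp a - 1) - a * Real.exp a * (Real.exp b - 1))
      = (a * (Real.exp a - 1)) * (b * (Real.exp b - 1)) * (Hfun b - Hfun a) := by
    unfold Hfun
    field_simp
  rw [hid]
  exact mul_pos (mul_pos (sign_lemma a ha) (sign_lemma b hb)) hH

lemma frank_deriv (θ s : ℝ) (hθ : θ ≠ 0) (hs : s ≠ 0) :
    deriv (fun u : ℝ => -Real.log ((Real.exp (-θ * u) - 1) / (Real.exp (-θ) - 1))) s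
      = θ * Real.exp (-θ * s) / (Real.exp (-θ * s) - 1) := by
  have hc : Real.exp (-θ) - 1 ≠ 0 := exp_sub_one_ne _ (neg_ne_zero.2 hθ)
  have hn : Real.exp (-θ * s) - 1 ≠ 0 := exp_sub_one_ne _ (by
    simp [hθ, hs])
  have h1 : HasDerivAt (fun u : ℝ => -θ * u) (-θ) s := by
    simpa using (hasDerivAt_id s).const_mul (-θ)
  have h2 : HasDerivAt (fun u : ℝ => Real.exp (-θ * u)) (Real.exp (-θ * s) * (-θ)) s :=
    (Real.hasDerivAt_exp (-θ * s)).comp s h1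
  have h3 := ((h2.sub_const 1).div_const (Real.exp (-θ) - 1)).log
    (div_ne_zero hn hc)
  have h4 := h3.neg
  rw [show deriv (fun u : ℝ => -Real.log ((Real.exp (-θ * u) - 1) / (Real.exp (-θ) - 1))) s = _ from h4.deriv, div_div_div_comm, div_self hc, div_one]
  ring

/-- The simplified form of the ratio. -/
lemma frank_strictMono (θ₁ θ₂ : ℝ) (h₁ : θ₁ ≠ 0) (h₂ : θ₂ ≠ 0) (hlt : θ₂ < θ₁) :
    StrictMonoOn (fun s : ℝ =>
      θ₂ * (Real.exp (θ₁ * s) - 1) / (θ₁ * (Real.exp (θ₂ * s) - 1))) (Ioo 0 1) := by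
  apply strictMonoOn_of_deriv_pos (convex_Ioo 0 1)
  · apply ContinuousOn.div
    · fun_prop
    · fun_prop
    · intro x hx
      exact mul_ne_zero h₁ (exp_sub_one_ne _ (mul_ne_zero h₂ (ne_of_gt hx.1)))
  · rw [interior_Ioo]
    intro x hx
    have hx0 : (0:ℝ) < x := hx.1
    have ha : θ₂ * x ≠ 0 := mul_ne_zero h₂ (ne_of_gt hx0)
    have hb : θ₁ * x ≠ 0 := mul_ne_zero h₁ (ne_of_gt hx0)
    have hden : θ₁ * (Real.exp (θ₂ * x) - 1) ≠ 0 :=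
      mul_ne_zero h₁ (exp_sub_one_ne _ ha)
    have hd1 : HasDerivAt (fun u : ℝ => θ₁ * u) θ₁ x := by
      simpa using (hasDerivAt_id x).const_mul θ₁
    have hd2 : HasDerivAt (fun u : ℝ => θ₂ * u) θ₂ x := by
      simpa using (hasDerivAt_id x).const_mul θ₂
    have he1 : HasDerivAt (fun u : ℝ => Real.exp (θ₁ * u)) (Real.exp (θ₁ * x) * θ₁) x :=
      (Real.hasDerivAt_exp (θ₁ * x)).comp x hd1
    have he2 : HasDerivAt (fun u : ℝ => Real.exp (θ₂ * u)) (Real.exp (θ₂ * x) * θ₂) x :=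
      (Real.hasDerivAt_exp (θ₂ * x)).comp x hd2
    have hnum := (he1.sub_const 1).const_mul θ₂
    have hdenf := (he2.sub_const 1).const_mul θ₁
    have hdiv := hnum.div hdenf hden
    rw [show deriv (fun s : ℝ => θ₂ * (Real.exp (θ₁ * s) - 1) / (θ₁ * (Real.exp (θ₂ * s) - 1))) x = _ from hdiv.deriv]
    apply div_pos
    · have hkey := key_ineq (θ₂ * x) (θ₁ * x) ha hb
        (by exact mul_lt_mul_of_pos_right hlt hx0)
      have hx3 : (0:ℝ) < x ^ 3 := by positivity
      nlinarith [hkey, hx3, mul_pos hx3 hx3]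
    · positivity

theorem frank_assumption2ii (θ₁ θ₂ : ℝ) (h₁ : θ₁ ≠ 0) (h₂ : θ₂ ≠ 0) (hlt : θ₂ < θ₁) :
    (∀ s ∈ Ioo (0:ℝ) 1,
      deriv (fun u : ℝ => -Real.log ((Real.exp (-θ₂ * u) - 1) / (Real.exp (-θ₂) - 1))) s /
        deriv (fun u : ℝ => -Real.log ((Real.exp (-θ₁ * u) - 1) / (Real.exp (-θ₁) - 1))) s =
        (θ₂ * Real.exp (-θ₂ * s) * (Real.exp (-θ₁ * s) - 1)) /
          (θ₁ * Real.exp (-θ₁ * s) * (Real.exp (-θ₂ * s) - 1))) ∧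
    StrictMonoOn (fun s : ℝ =>
      (θ₂ * Real.exp (-θ₂ * s) * (Real.exp (-θ₁ * s) - 1)) /
        (θ₁ * Real.exp (-θ₁ * s) * (Real.exp (-θ₂ * s) - 1))) (Ioo 0 1) := by
  constructor
  · intro s hs
    rw [frank_deriv θ₂ s h₂ (ne_of_gt hs.1), frank_deriv θ₁ s h₁ (ne_of_gt hs.1)]
    have hn1 : Real.exp (-θ₁ * s) - 1 ≠ 0 := exp_sub_one_ne _ (by simp [h₁, ne_of_gt hs.1])
    have hn2 : Real.exp (-θ₂ * s) - 1 ≠ 0 := exp_sub_one_ne _ (by simp [h₂, ne_of_gt hs.1])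
    have he1 := Real.exp_pos (-θ₁ * s)
    field_simp
  · have heq : EqOn (fun s : ℝ =>
        θ₂ * (Real.exp (θ₁ * s) - 1) / (θ₁ * (Real.exp (θ₂ * s) - 1)))
        (fun s : ℝ =>
        (θ₂ * Real.exp (-θ₂ * s) * (Real.exp (-θ₁ * s) - 1)) /
          (θ₁ * Real.exp (-θ₁ * s) * (Real.exp (-θ₂ * s) - 1))) (Ioo 0 1) := by
      intro s hs
      simp only
      have hs0 : s ≠ 0 := ne_of_gt hs.1
      have hA : Real.exp (-θ₁ * s) * Real.exp (θ₁ * s) = 1 := by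
        rw [← Real.exp_add]; ring_nf; exact Real.exp_zero
      have hB : Real.exp (-θ₂ * s) * Real.exp (θ₂ * s) = 1 := by
        rw [← Real.exp_add]; ring_nf; exact Real.exp_zero
      have hn2 : Real.exp (-θ₂ * s) - 1 ≠ 0 := exp_sub_one_ne _ (by simp [h₂, hs0])
      have hN2 : Real.exp (θ₂ * s) - 1 ≠ 0 := exp_sub_one_ne _ (mul_ne_zero h₂ hs0)
      have he1 : Real.exp (-θ₁ * s) ≠ 0 := (Real.exp_pos _).ne'
      rw [div_eq_div_iff (by exact mul_ne_zero h₁ (exp_sub_one_ne _ (mul_ne_zero h₂ hs0)))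
        (mul_ne_zero (mul_ne_zero h₁ he1) hn2)]
      linear_combination (θ₁ * θ₂ * (Real.exp (-θ₂*s) - 1)) * hA -
        (θ₁ * θ₂ * (Real.exp (-θ₁*s) - 1)) * hB
    intro x hx y hy hxy
    rw [← heq hx, ← heq hy]
    exact frank_strictMono θ₁ θ₂ h₁ h₂ hlt hx hy hxy
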